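/- Let p, q be positive integers, n = p + q, and let v be an ascending shuffle in S_n. If w is any permutation of {1,…,n} with r_w(i,p) = r_v(i,p) for all i ∈ {1,…,n}, then v ≤ w in the Bruhat order. In other words, v is the unique minimal element of the set {w ∈ S_n : r_w(i,p) = r_v(i,p) for all i}. -/

import Mathlib

/-- The rank function `r_w(i,j) = #{k ≤ i : w(k) ≤ j}` (positions and values 1-indexed). -/
def rk {n : ℕ} (w : Equiv.Perm (Fin n)) (i j : ℕ) : ℕ :=
  (Finset.univ.filter (fun k : Fin n => (k : ℕ) + 1 ≤ i ∧ (w k : ℕ) + 1 ≤ j)).card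

/-- The Bruhat order: `u ≤ v` iff `r_u(i,j) ≥ r_v(i,j)` for all `i, j`. -/
def BruhatLE {n : ℕ} (u v : Equiv.Perm (Fin n)) : Prop :=
  ∀ i j : ℕ, rk v i j ≤ rk u i j

/-- `v` is an ascending shuffle of `1,…,p` and `p+1,…,n`. -/
def AscShuffle (p : ℕ) {n : ℕ} (v : Equiv.Perm (Fin n)) : Prop :=
  ∀ i j : Fin n, i < j →
    ((v i : ℕ) + 1 ≤ p ∧ (v j : ℕ) + 1 ≤ p → v i < v j) ∧
    (p < (v i : ℕ) + 1 ∧ p < (v j : ℕ) + 1 → v i < v j)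

open Finset
open Fin.NatCast

lemma card_val_lt {n : ℕ} (c : ℕ) (hc : c ≤ n) :
    (univ.filter fun t : Fin n => (t : ℕ) < c).card = c := by
  induction c with
  | zero => simp
  | succ c ih =>
    have : (univ.filter fun t : Fin n => (t : ℕ) < c + 1)
        = insert (⟨c, hc⟩ : Fin n) (univ.filter fun t : Fin n => (t : ℕ) < c) := by
      ext t
      simp only [mem_filter, mem_univ, true_and, mem_insert, Fin.ext_iff]
      omega
    rw [this, card_insert_of_notMem (by simp), ih (by omega)]

lemma rk_le_n {n : ℕ} (u : Equiv.Perm (Fin n)) (i j : ℕ) : rk u i j ≤ n := by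
  calc rk u i j ≤ (univ : Finset (Fin n)).card := card_le_card (filter_subset _ _)
  _ = n := by simp

lemma rk_mono_j {n : ℕ} (u : Equiv.Perm (Fin n)) (i : ℕ) {j j' : ℕ} (h : j ≤ j') :
    rk u i j ≤ rk u i j' := by
  apply card_le_card
  intro k hk
  simp only [mem_filter] at *
  exact ⟨hk.1, hk.2.1, by omega⟩

lemma rk_le_j {n : ℕ} (u : Equiv.Perm (Fin n)) (i j : ℕ) : rk u i j ≤ j := by
  have := Finset.card_le_card_of_injOn (fun k : Fin n => (u k : ℕ))
    (s := univ.filter (fun k : Fin n => (k : ℕ) + 1 ≤ i ∧ (u k : ℕ) + 1 ≤ j))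
    (t := range j)
    (by intro k hk; simp only [mem_coe, mem_filter] at hk; simp; omega)
    (by intro a _ b _ hab
        exact u.injective (Fin.ext hab))
  simpa [rk] using this

/-- If `v k` is a small value, then `v k + 1 = rk v (k+1) p`. -/
lemma small_rank {p n : ℕ} {v : Equiv.Perm (Fin n)} (hv : AscShuffle p v)
    (k : Fin n) (hk : (v k : ℕ) < p) : rk v ((k : ℕ) + 1) p = (v k : ℕ) + 1 := by
  unfold rk
  rw [← card_val_lt ((v k : ℕ) + 1) (v k).isLt]
  apply Finset.card_bij (fun m _ => v m)
  · intro m hm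
    simp only [mem_filter, mem_univ, true_and] at hm ⊢
    rcases lt_or_eq_of_le (show (m : ℕ) ≤ (k : ℕ) by omega) with h | h
    · have := Fin.lt_iff_val_lt_val.mp ((hv m k (by exact h)).1 ⟨by omega, by omega⟩)
      omega
    · have heq : m = k := Fin.ext h
      rw [heq]
      omega
  · intro a _ b _ hab; exact v.injective hab
  · intro t ht
    simp only [mem_filter, mem_univ, true_and] at ht
    refine ⟨v.symm t, ?_, by simp⟩
    simp only [mem_filter, mem_univ, true_and, Equiv.apply_symm_apply]
    constructor
    · by_contra hcon
      have hkm : k < v.symm t := by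
        rw [Fin.lt_iff_val_lt_val]; omega
      have := (hv k (v.symm t) hkm).1 ⟨by omega, by simp; omega⟩
      simp only [Equiv.apply_symm_apply, Fin.lt_iff_val_lt_val] at this
      omega
    · omega

/-- If `v k` is a large value, the number of large positions up to `k` is `v k + 1 - p`. -/
lemma large_rank {p n : ℕ} {v : Equiv.Perm (Fin n)} (hv : AscShuffle p v)
    (k : Fin n) (hk : p ≤ (v k : ℕ)) :
    (univ.filter fun m : Fin n => (m : ℕ) ≤ (k : ℕ) ∧ p ≤ (v m : ℕ)).card
      = (v k : ℕ) + 1 - p := by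
  have htarget : (univ.filter fun t : Fin n => p ≤ (t : ℕ) ∧ (t : ℕ) < (v k : ℕ) + 1).card
      = (v k : ℕ) + 1 - p := by
    have hsum := Finset.card_filter_add_card_filter_not
      (s := univ.filter fun t : Fin n => (t : ℕ) < (v k : ℕ) + 1)
      (p := fun t : Fin n => (t : ℕ) < p)
    rw [Finset.filter_filter, Finset.filter_filter] at hsum
    have h1 : (univ.filter fun t : Fin n => (t : ℕ) < (v k : ℕ) + 1 ∧ (t : ℕ) < p)
        = univ.filter fun t : Fin n => (t : ℕ) < p := by
      apply filter_congr; intro t _; omega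
    have h2 : (univ.filter fun t : Fin n => (t : ℕ) < (v k : ℕ) + 1 ∧ ¬ (t : ℕ) < p)
        = univ.filter fun t : Fin n => p ≤ (t : ℕ) ∧ (t : ℕ) < (v k : ℕ) + 1 := by
      apply filter_congr; intro t _; omega
    rw [h1, h2, card_val_lt _ (v k).isLt, card_val_lt p (by have := (v k).isLt; omega)] at hsum
    omega
  rw [← htarget]
  apply Finset.card_bij (fun m _ => v m)
  · intro m hm
    simp only [mem_filter, mem_univ, true_and] at hm ⊢
    rcases lt_or_eq_of_le hm.1 with h | h
    · have := Fin.lt_iff_val_lt_val.mp ((hv m k (by exact h)).2 ⟨by omega, by omega⟩)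
      omega
    · have heq : m = k := Fin.ext h
      rw [heq]; omega
  · intro a _ b _ hab; exact v.injective hab
  · intro t ht
    simp only [mem_filter, mem_univ, true_and] at ht
    refine ⟨v.symm t, ?_, by simp⟩
    simp only [mem_filter, mem_univ, true_and, Equiv.apply_symm_apply]
    constructor
    · by_contra hcon
      have hkm : k < v.symm t := by
        rw [Fin.lt_iff_val_lt_val]; omega
      have := (hv k (v.symm t) hkm).2 ⟨by omega, by simp; omega⟩
      simp only [Equiv.apply_symm_apply, Fin.lt_iff_val_lt_val] at this
      omega
    · omega

theorem stmt4 (p q n : ℕ) (hp : 0 < p) (hq : 0 < q) (hn : n = p + q)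
    (v : Equiv.Perm (Fin n)) (hv : AscShuffle p v)
    (w : Equiv.Perm (Fin n))
    (hw : ∀ i : ℕ, 1 ≤ i → i ≤ n → rk w i p = rk v i p) :
    BruhatLE v w := by
  haveI : NeZero n := ⟨by omega⟩
  -- extend hw to all i
  have hw' : ∀ i : ℕ, rk w i p = rk v i p := by
    intro i
    rcases Nat.eq_zero_or_pos i with h0 | h1
    · subst h0
      unfold rk
      rw [filter_false_of_mem (by intro k _; simp), filter_false_of_mem (by intro k _; simp)]
    rcases le_or_gt i n with h | h
    · exact hw i h1 h
    · have e : ∀ u : Equiv.Perm (Fin n), rk u i p = rk u n p := by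
        intro u
        unfold rk
        congr 1
        apply filter_congr
        intro k _
        have := k.isLt
        omega
      rw [e w, e v, hw n (by omega) le_rfl]
  intro i j
  set a := rk v i p with ha
  have hap : a ≤ p := rk_le_j v i p
  have han : a ≤ n := rk_le_n v i p
  -- split a rank set into small and large value parts
  have hsplit : ∀ u : Equiv.Perm (Fin n), rk u i j
      = rk u i (min j p)
        + (univ.filter fun k : Fin n =>
            (k : ℕ) + 1 ≤ i ∧ (u k : ℕ) + 1 ≤ j ∧ p ≤ (u k : ℕ)).card := by
    intro u
    have hsum := Finset.card_filter_add_card_filter_not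
      (s := univ.filter fun k : Fin n => (k : ℕ) + 1 ≤ i ∧ (u k : ℕ) + 1 ≤ j)
      (p := fun k : Fin n => (u k : ℕ) < p)
    rw [Finset.filter_filter, Finset.filter_filter] at hsum
    have h1 : (univ.filter fun k : Fin n =>
          ((k : ℕ) + 1 ≤ i ∧ (u k : ℕ) + 1 ≤ j) ∧ (u k : ℕ) < p)
        = univ.filter fun k : Fin n => (k : ℕ) + 1 ≤ i ∧ (u k : ℕ) + 1 ≤ min j p := by
      apply filter_congr; intro k _; omega
    have h2 : (univ.filter fun k : Fin n =>
          ((k : ℕ) + 1 ≤ i ∧ (u k : ℕ) + 1 ≤ j) ∧ ¬ (u k : ℕ) < p)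
        = univ.filter fun k : Fin n => (k : ℕ) + 1 ≤ i ∧ (u k : ℕ) + 1 ≤ j ∧ p ≤ (u k : ℕ) := by
      apply filter_congr; intro k _; omega
    rw [h1, h2] at hsum
    unfold rk
    omega
  rw [hsplit w, hsplit v]
  -- SMALL PART
  have key_small : ∀ j' : ℕ, j' ≤ p → min a j' ≤ rk v i j' := by
    intro j' hj'
    set c := min a j' with hc
    have hcn : c ≤ n := le_trans (min_le_left _ _) han
    have := Finset.card_le_card_of_injOn (fun t : ℕ => v.symm ((t : Fin n)))
      (s := range c)
      (t := univ.filter fun k : Fin n => (k : ℕ) + 1 ≤ i ∧ (v k : ℕ) + 1 ≤ j')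
      ?_ ?_
    · simpa [rk] using this
    · intro t ht
      simp only [mem_coe, mem_range] at ht
      have htn : t < n := by omega
      have hval : ((t : Fin n) : ℕ) = t := Fin.val_cast_of_lt htn
      set k := v.symm ((t : Fin n)) with hkdef
      have hvk : v k = (t : Fin n) := v.apply_symm_apply _
      simp only [mem_coe, mem_filter, mem_univ, true_and, ← hkdef, hvk, hval]
      refine ⟨?_, by omega⟩
      by_contra hcon
      have hsr : rk v ((k : ℕ) + 1) p = t + 1 := by
        rw [small_rank hv k (by rw [hvk, hval]; omega), hvk, hval]
      have hsub : insert k (univ.filter fun m : Fin n => (m : ℕ) + 1 ≤ i ∧ (v m : ℕ) + 1 ≤ p)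
          ⊆ univ.filter fun m : Fin n => (m : ℕ) + 1 ≤ (k : ℕ) + 1 ∧ (v m : ℕ) + 1 ≤ p := by
        intro m hm
        rcases mem_insert.mp hm with h | h
        · subst h
          simp only [mem_filter, mem_univ, true_and]
          exact ⟨le_rfl, by rw [hvk, hval]; omega⟩
        · simp only [mem_filter, mem_univ, true_and] at h ⊢
          exact ⟨by omega, h.2⟩
      have hnotmem : k ∉ (univ.filter fun m : Fin n => (m : ℕ) + 1 ≤ i ∧ (v m : ℕ) + 1 ≤ p) := by
        simp only [mem_filter, mem_univ, true_and, not_and]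
        intro hcontra; omega
      have := card_le_card hsub
      rw [card_insert_of_notMem hnotmem] at this
      have : a + 1 ≤ rk v ((k : ℕ) + 1) p := this
      omega
    · intro s hs t ht hst
      simp only [mem_coe, mem_range] at hs ht
      have := v.symm.injective hst
      have h1 : ((s : Fin n) : ℕ) = s := Fin.val_cast_of_lt (by omega)
      have h2 : ((t : Fin n) : ℕ) = t := Fin.val_cast_of_lt (by omega)
      rw [← h1, ← h2, this]
  have hsmall : rk w i (min j p) ≤ rk v i (min j p) := by
    have h1 : rk w i (min j p) ≤ a :=
      le_trans (rk_mono_j w i (min_le_right _ _)) (le_of_eq ((hw' i).trans ha.symm))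
    have h2 : rk w i (min j p) ≤ min j p := rk_le_j w i _
    have := key_small (min j p) (min_le_right _ _)
    omega
  -- LARGE PART
  -- total count of positions < i among the n positions
  have hposcount : (univ.filter fun k : Fin n => (k : ℕ) + 1 ≤ i).card = min i n := by
    have : (univ.filter fun k : Fin n => (k : ℕ) + 1 ≤ i)
        = univ.filter fun k : Fin n => (k : ℕ) < min i n := by
      apply filter_congr; intro k _; have := k.isLt; omega
    rw [this, card_val_lt _ (min_le_right _ _)]
  -- L∞ for v : number of large positions < i
  have hLinf : ∀ u : Equiv.Perm (Fin n), rk u i p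
      + (univ.filter fun k : Fin n => (k : ℕ) + 1 ≤ i ∧ p ≤ (u k : ℕ)).card = min i n := by
    intro u
    have hsum := Finset.card_filter_add_card_filter_not
      (s := univ.filter fun k : Fin n => (k : ℕ) + 1 ≤ i)
      (p := fun k : Fin n => (u k : ℕ) < p)
    rw [Finset.filter_filter, Finset.filter_filter] at hsum
    have h1 : (univ.filter fun k : Fin n => ((k : ℕ) + 1 ≤ i) ∧ (u k : ℕ) < p)
        = univ.filter fun k : Fin n => (k : ℕ) + 1 ≤ i ∧ (u k : ℕ) + 1 ≤ p := by
      apply filter_congr; intro k _; omega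
    have h2 : (univ.filter fun k : Fin n => ((k : ℕ) + 1 ≤ i) ∧ ¬ (u k : ℕ) < p)
        = univ.filter fun k : Fin n => (k : ℕ) + 1 ≤ i ∧ p ≤ (u k : ℕ) := by
      apply filter_congr; intro k _; omega
    rw [h1, h2, hposcount] at hsum
    exact hsum
  have hlarge : (univ.filter fun k : Fin n =>
        (k : ℕ) + 1 ≤ i ∧ (w k : ℕ) + 1 ≤ j ∧ p ≤ (w k : ℕ)).card
      ≤ (univ.filter fun k : Fin n =>
        (k : ℕ) + 1 ≤ i ∧ (v k : ℕ) + 1 ≤ j ∧ p ≤ (v k : ℕ)).card := by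
    rcases le_or_gt j p with hjp | hjp
    · have : (univ.filter fun k : Fin n =>
          (k : ℕ) + 1 ≤ i ∧ (w k : ℕ) + 1 ≤ j ∧ p ≤ (w k : ℕ)) = ∅ := by
        apply filter_false_of_mem; intro k _; push_neg; intro _ h; omega
      rw [this]; simp
    · -- j > p
      -- bound 1: card ≤ j - p
      have hb1 : (univ.filter fun k : Fin n =>
            (k : ℕ) + 1 ≤ i ∧ (w k : ℕ) + 1 ≤ j ∧ p ≤ (w k : ℕ)).card ≤ j - p := by
        have := Finset.card_le_card_of_injOn (fun k : Fin n => (w k : ℕ) - p)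
          (s := univ.filter fun k : Fin n =>
            (k : ℕ) + 1 ≤ i ∧ (w k : ℕ) + 1 ≤ j ∧ p ≤ (w k : ℕ))
          (t := range (j - p))
          (by intro k hk; simp only [mem_coe, mem_filter, mem_univ, true_and] at hk
              simp only [mem_coe, mem_range]; omega)
          (by intro s hs t ht hst
              simp only [mem_coe, mem_filter, mem_univ, true_and] at hs ht
              simp only at hst
              exact w.injective (Fin.ext (by omega)))
        simpa using this
      -- bound 2: card ≤ min i n - a
      have hb2 : (univ.filter fun k : Fin n =>
            (k : ℕ) + 1 ≤ i ∧ (w k : ℕ) + 1 ≤ j ∧ p ≤ (w k : ℕ)).card ≤ min i n - a := by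
        have hsub := card_le_card (show (univ.filter fun k : Fin n =>
            (k : ℕ) + 1 ≤ i ∧ (w k : ℕ) + 1 ≤ j ∧ p ≤ (w k : ℕ))
            ⊆ univ.filter fun k : Fin n => (k : ℕ) + 1 ≤ i ∧ p ≤ (w k : ℕ) by
          intro k hk; simp only [mem_filter] at hk ⊢; tauto)
        have h3 := hLinf w
        have h4 := hw' i
        omega
      -- number of large positions among first i for v
      have hLv : (univ.filter fun k : Fin n => (k : ℕ) + 1 ≤ i ∧ p ≤ (v k : ℕ)).card
          = min i n - a := by
        have := hLinf v; omega
      have hqa : min i n - a ≤ q := by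
        -- large positions inject into large values
        have := Finset.card_le_card_of_injOn (fun k : Fin n => v k)
          (s := univ.filter fun k : Fin n => (k : ℕ) + 1 ≤ i ∧ p ≤ (v k : ℕ))
          (t := univ.filter fun t : Fin n => ¬ (t : ℕ) < p)
          (by intro k hk; simp only [mem_coe, mem_filter, mem_univ, true_and] at hk ⊢; omega)
          (by intro s _ t _ hst; exact v.injective hst)
        have hcard : (univ.filter fun t : Fin n => ¬ (t : ℕ) < p).card = q := by
          have hsum := Finset.card_filter_add_card_filter_not
            (s := (univ : Finset (Fin n)))
            (p := fun t : Fin n => (t : ℕ) < p)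
          rw [card_val_lt p (by omega), card_univ, Fintype.card_fin] at hsum
          omega
        rw [hLv, hcard] at this
        exact this
      -- key: min (min i n - a) (j - p) ≤ large count for v
      set c := min (min i n - a) (j - p) with hc
      have hkey : c ≤ (univ.filter fun k : Fin n =>
          (k : ℕ) + 1 ≤ i ∧ (v k : ℕ) + 1 ≤ j ∧ p ≤ (v k : ℕ)).card := by
        have hcq : c ≤ q := le_trans (min_le_left _ _) hqa
        have := Finset.card_le_card_of_injOn (fun t : ℕ => v.symm (((p + t : ℕ) : Fin n)))
          (s := range c)
          (t := univ.filter fun k : Fin n =>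
            (k : ℕ) + 1 ≤ i ∧ (v k : ℕ) + 1 ≤ j ∧ p ≤ (v k : ℕ))
          ?_ ?_
        · simpa using this
        · intro t ht
          simp only [mem_coe, mem_range] at ht
          have htn : p + t < n := by omega
          have hval : (((p + t : ℕ) : Fin n) : ℕ) = p + t := Fin.val_cast_of_lt htn
          set k := v.symm (((p + t : ℕ) : Fin n)) with hkdef
          have hvk : v k = ((p + t : ℕ) : Fin n) := v.apply_symm_apply _
          simp only [mem_coe, mem_filter, mem_univ, true_and, ← hkdef, hvk, hval]
          refine ⟨?_, by omega, by omega⟩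
          by_contra hcon
          have hlr : (univ.filter fun m : Fin n => (m : ℕ) ≤ (k : ℕ) ∧ p ≤ (v m : ℕ)).card
              = t + 1 := by
            rw [large_rank hv k (by rw [hvk, hval]; omega), hvk, hval]
            omega
          have hsub : insert k (univ.filter fun m : Fin n => (m : ℕ) + 1 ≤ i ∧ p ≤ (v m : ℕ))
              ⊆ univ.filter fun m : Fin n => (m : ℕ) ≤ (k : ℕ) ∧ p ≤ (v m : ℕ) := by
            intro m hm
            rcases mem_insert.mp hm with h | h
            · subst h
              simp only [mem_filter, mem_univ, true_and]
              exact ⟨le_rfl, by rw [hvk, hval]; omega⟩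
            · simp only [mem_filter, mem_univ, true_and] at h ⊢
              exact ⟨by omega, h.2⟩
          have hnotmem : k ∉ (univ.filter fun m : Fin n =>
              (m : ℕ) + 1 ≤ i ∧ p ≤ (v m : ℕ)) := by
            simp only [mem_filter, mem_univ, true_and, not_and]
            intro hcontra; omega
          have hcard := card_le_card hsub
          rw [card_insert_of_notMem hnotmem, hlr, hLv] at hcard
          omega
        · intro s hs t ht hst
          simp only [mem_coe, mem_range] at hs ht
          have := v.symm.injective hst
          have h1 : (((p + s : ℕ) : Fin n) : ℕ) = p + s := Fin.val_cast_of_lt (by omega)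
          have h2 : (((p + t : ℕ) : Fin n) : ℕ) = p + t := Fin.val_cast_of_lt (by omega)
          have : p + s = p + t := by rw [← h1, ← h2, this]
          omega
      omega
  omega
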